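/- For every positive integer k there exists a k-connected X-convex bipartite graph G with pe(G) = 2. Specifically, let ℓ = k(k+2), take the complete bipartite graph K_{k,ℓ} with parts Y (|Y| = k) and X = {x_1, ..., x_ℓ}, and add vertices z_1, ..., z_{k+2} where z_i is adjacent to x_j for (i-1)k + 1 ≤ j ≤ ik; then G is k-connected, X-convex, and pe(G) = 2. -/

import Mathlib

open SimpleGraph

variable {V : Type*} [Fintype V] [DecidableEq V]

/-- Distance from a vertex `u` to the vertex set of a walk `P`. -/
noncomputable def walkDist (G : SimpleGraph V) {a b : V} (P : G.Walk a b) (u : V) : ℕ :=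
  P.support.toFinset.inf' ⟨a, List.mem_toFinset.mpr P.start_mem_support⟩ (fun x => G.dist u x)

/-- Eccentricity of a walk: max distance from any vertex of `G` to the walk. -/
noncomputable def eccW (G : SimpleGraph V) {a b : V} (P : G.Walk a b) : ℕ :=
  Finset.univ.sup (walkDist G P)

/-- Path eccentricity of a graph. -/
noncomputable def pe (G : SimpleGraph V) : ℕ :=
  sInf {m | ∃ (a b : V) (P : G.Walk a b), P.IsPath ∧ eccW G P = m}

/-- `P` is a longest path in `G`. -/
def IsLongestPath (G : SimpleGraph V) {a b : V} (P : G.Walk a b) : Prop :=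
  P.IsPath ∧ ∀ (c d : V) (Q : G.Walk c d), Q.IsPath → Q.length ≤ P.length

/-- `G` is `k`-connected. -/
def KConnected (k : ℕ) (G : SimpleGraph V) : Prop :=
  k + 1 ≤ Fintype.card V ∧
    ∀ S : Finset V, S.card < k → (G.induce ((↑S : Set V)ᶜ)).Connected

/-- Adjacency relation of the graph `G` from the paper: `K_{k,ℓ}` with parts
`Y = Fin k` and `X = Fin ℓ` where `ℓ = k(k+2)`, plus vertices `z₁, …, z_{k+2}`
(`Fin (k+2)`) where `z_i` is adjacent to `x_j` for `(i-1)k + 1 ≤ j ≤ ik`. -/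
def convexTightRel (k : ℕ) :
    (Fin k ⊕ Fin (k + 2)) ⊕ Fin (k * (k + 2)) →
    (Fin k ⊕ Fin (k + 2)) ⊕ Fin (k * (k + 2)) → Prop
  | Sum.inl (Sum.inl _), Sum.inr _ => True
  | Sum.inl (Sum.inr z), Sum.inr x => z.val * k ≤ x.val ∧ x.val < z.val * k + k
  | _, _ => False

/-! ### Auxiliary material -/

abbrev VT (k : ℕ) := (Fin k ⊕ Fin (k + 2)) ⊕ Fin (k * (k + 2))

/-- The "region" of a vertex: `none` for `Y`-vertices, the block index otherwise. -/
def regionOf (k : ℕ) : VT k → Option (Fin (k + 2))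
  | Sum.inl (Sum.inl _) => none
  | Sum.inl (Sum.inr z) => some z
  | Sum.inr x => some ⟨x.val / k, by
      rcases Nat.eq_zero_or_pos k with h | h
      · simp [h]
      · exact (Nat.div_lt_iff_lt_mul h).2 (by have := x.isLt; nlinarith)⟩

lemma VT.adj_yx {k : ℕ} (y : Fin k) (x : Fin (k * (k + 2))) :
    (SimpleGraph.fromRel (convexTightRel k)).Adj (Sum.inl (Sum.inl y)) (Sum.inr x) := by
  rw [fromRel_adj]
  exact ⟨by simp, Or.inl trivial⟩

lemma VT.adj_zx {k : ℕ} (z : Fin (k + 2)) (x : Fin (k * (k + 2)))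
    (h1 : z.val * k ≤ x.val) (h2 : x.val < z.val * k + k) :
    (SimpleGraph.fromRel (convexTightRel k)).Adj (Sum.inl (Sum.inr z)) (Sum.inr x) := by
  rw [fromRel_adj]
  exact ⟨by simp, Or.inl ⟨h1, h2⟩⟩

lemma VT.region_eq_of_adj_z {k : ℕ} {z : Fin (k + 2)} {v : VT k}
    (h : (SimpleGraph.fromRel (convexTightRel k)).Adj (Sum.inl (Sum.inr z)) v) :
    regionOf k v = some z := by
  rw [fromRel_adj] at h
  obtain ⟨hne, h⟩ := h
  rcases v with (y | z') | x
  · simp [convexTightRel] at h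
  · simp [convexTightRel] at h
  · have hb : z.val * k ≤ x.val ∧ x.val < z.val * k + k := by
      simpa [convexTightRel] using h
    have hk : 0 < k := by
      rcases Nat.eq_zero_or_pos k with h0 | h0
      · exfalso; omega
      · exact h0
    have : x.val / k = z.val :=
      Nat.div_eq_of_lt_le hb.1 (by rw [Nat.succ_mul]; exact hb.2)
    simp only [regionOf, Option.some.injEq]
    exact Fin.ext this

lemma VT.region_adj {k : ℕ} {a b : VT k}
    (h : (SimpleGraph.fromRel (convexTightRel k)).Adj a b) :
    regionOf k a = none ∨ regionOf k b = none ∨ regionOf k a = regionOf k b := by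
  rcases a with (y | z) | x
  · exact Or.inl rfl
  · exact Or.inr (Or.inr (VT.region_eq_of_adj_z h).symm)
  · rcases b with (y' | z') | x'
    · exact Or.inr (Or.inl rfl)
    · exact Or.inr (Or.inr (VT.region_eq_of_adj_z h.symm))
    · rw [fromRel_adj] at h
      simp [convexTightRel] at h

/-- Cost of a region: 0 for Y-vertices, 1 otherwise. -/
def exCost {k : ℕ} : Option (Fin (k + 2)) → ℕ
  | none => 0
  | some _ => 1

lemma exCost_le_one {k : ℕ} (o : Option (Fin (k + 2))) : exCost o ≤ 1 := by
  rcases o with _ | r <;> simp [exCost]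

/-- Key counting lemma: the number of distinct regions met by a walk is at most the
number of `Y`-vertices on the walk plus one. -/
lemma VT.count_key {k : ℕ} {a b : VT k}
    (W : (SimpleGraph.fromRel (convexTightRel k)).Walk a b) :
    (W.support.filterMap (regionOf k)).toFinset.card ≤
      (W.support.countP (fun v => (regionOf k v).isNone)) + exCost (regionOf k a) := by
  induction W with
  | nil =>
    rename_i u
    rcases h : regionOf k u with _ | r <;> simp [h, exCost]
  | cons hadj W ih =>
    rename_i a c b
    rw [Walk.support_cons]
    rcases ha : regionOf k a with _ | r
    · rw [List.filterMap_cons_none (by simp [ha]),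
        List.countP_cons_of_pos (by simp [ha])]
      have h1 := exCost_le_one (regionOf k c)
      simp only [exCost]
      omega
    · have hc : regionOf k c = none ∨ regionOf k c = some r := by
        rcases VT.region_adj hadj with h | h | h
        · rw [ha] at h; simp at h
        · exact Or.inl h
        · exact Or.inr (by rw [← h, ha])
      rw [List.countP_cons_of_neg (by simp [ha]),
        List.filterMap_cons_some (by simpa using ha), List.toFinset_cons]
      rcases hc with hc | hc
      · have h1 := Finset.card_insert_le r (W.support.filterMap (regionOf k)).toFinset
        rw [hc] at ih
        simp only [exCost] at ih ⊢
        omega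
      · have hmem : r ∈ (W.support.filterMap (regionOf k)).toFinset :=
          List.mem_toFinset.mpr (List.mem_filterMap.mpr ⟨c, W.start_mem_support, hc⟩)
        rw [Finset.insert_eq_self.mpr hmem]
        have h1 := exCost_le_one (regionOf k c)
        simp only [exCost]
        omega

lemma VT.countP_le {k : ℕ} {a b : VT k}
    {W : (SimpleGraph.fromRel (convexTightRel k)).Walk a b} (hp : W.IsPath) :
    (W.support.countP (fun v => (regionOf k v).isNone)) ≤ k := by
  rw [List.countP_eq_length_filter]
  set L := W.support.filter (fun v => (regionOf k v).isNone) with hL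
  have hnd : L.Nodup := hp.support_nodup.filter _
  have hsub : L.toFinset ⊆ Finset.univ.image
      (fun y : Fin k => (Sum.inl (Sum.inl y) : VT k)) := by
    intro v hv
    rw [List.mem_toFinset, hL, List.mem_filter] at hv
    rcases v with (y | z) | x
    · simp
    · simp [regionOf] at hv
    · simp [regionOf] at hv
  have := Finset.card_le_card hsub
  rw [List.toFinset_card_of_nodup hnd] at this
  calc L.length ≤ (Finset.univ.image
      (fun y : Fin k => (Sum.inl (Sum.inl y) : VT k))).card := this
    _ ≤ (Finset.univ : Finset (Fin k)).card := Finset.card_image_le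
    _ = k := by simp

lemma VT.not_all_hit {k : ℕ} {a b : VT k}
    {W : (SimpleGraph.fromRel (convexTightRel k)).Walk a b} (hp : W.IsPath)
    (hall : ∀ i : Fin (k + 2), ∃ v ∈ W.support, regionOf k v = some i) : False := by
  have h1 := VT.count_key W
  have h2 := VT.countP_le hp
  have h3 : (Finset.univ : Finset (Fin (k + 2))) ⊆
      (W.support.filterMap (regionOf k)).toFinset := by
    intro i _
    obtain ⟨v, hv, hvr⟩ := hall i
    exact List.mem_toFinset.mpr (List.mem_filterMap.mpr ⟨v, hv, hvr⟩)
  have h4 := Finset.card_le_card h3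
  rw [Finset.card_univ, Fintype.card_fin] at h4
  have h5 := exCost_le_one (regionOf k a)
  omega

/-- Base point: the first `Y`-vertex. -/
def VT.y0 (k : ℕ) (hk : 1 ≤ k) : VT k := Sum.inl (Sum.inl ⟨0, hk⟩)

lemma VT.lpos {k : ℕ} (hk : 1 ≤ k) : 0 < k * (k + 2) :=
  Nat.mul_pos hk (by omega)

lemma VT.blockmem {k : ℕ} (hk : 1 ≤ k) (z : Fin (k + 2)) {j : ℕ} (hj : j < k) :
    z.val * k + j < k * (k + 2) := by
  have hz := z.isLt
  nlinarith

lemma VT.walk_to_y0 {k : ℕ} (hk : 1 ≤ k) (u : VT k) :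
    ∃ W : (SimpleGraph.fromRel (convexTightRel k)).Walk u (VT.y0 k hk), W.length ≤ 2 := by
  rcases u with (y | z) | x
  · refine ⟨Walk.cons (VT.adj_yx y ⟨0, VT.lpos hk⟩)
      (Walk.cons (VT.adj_yx ⟨0, hk⟩ ⟨0, VT.lpos hk⟩).symm Walk.nil), Nat.le_of_eq rfl⟩
  · refine ⟨Walk.cons (VT.adj_zx z ⟨z.val * k, by simpa using VT.blockmem hk z hk⟩
        (le_refl _) (by show z.val * k < z.val * k + k; omega))
      (Walk.cons (VT.adj_yx ⟨0, hk⟩ ⟨z.val * k, by simpa using VT.blockmem hk z hk⟩).symm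
        Walk.nil), Nat.le_of_eq rfl⟩
  · exact ⟨Walk.cons (VT.adj_yx ⟨0, hk⟩ x).symm Walk.nil, Nat.le_succ_of_le (Nat.le_of_eq rfl)⟩

lemma VT.reach {k : ℕ} (hk : 1 ≤ k) (u v : VT k) :
    (SimpleGraph.fromRel (convexTightRel k)).Reachable u v := by
  obtain ⟨W1, -⟩ := VT.walk_to_y0 hk u
  obtain ⟨W2, -⟩ := VT.walk_to_y0 hk v
  exact W1.reachable.trans W2.reachable.symm

lemma VT.dist_le_two {k : ℕ} (hk : 1 ≤ k) (u : VT k) :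
    (SimpleGraph.fromRel (convexTightRel k)).dist u (VT.y0 k hk) ≤ 2 := by
  obtain ⟨W, hW⟩ := VT.walk_to_y0 hk u
  exact (SimpleGraph.dist_le W).trans hW

lemma VT.eq_or_adj_of_dist_le_one {k : ℕ} (hk : 1 ≤ k) {u v : VT k}
    (h : (SimpleGraph.fromRel (convexTightRel k)).dist u v ≤ 1) :
    u = v ∨ (SimpleGraph.fromRel (convexTightRel k)).Adj u v := by
  interval_cases hd : (SimpleGraph.fromRel (convexTightRel k)).dist u v
  · rcases SimpleGraph.dist_eq_zero_iff_eq_or_not_reachable.mp hd with h | h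
    · exact Or.inl h
    · exact absurd (VT.reach hk u v) h
  · exact Or.inr (SimpleGraph.dist_eq_one_iff_adj.mp hd)

lemma VT.exists_not_mem {α : Type*} [DecidableEq α] {n : ℕ} (f : Fin n → α)
    (hf : Function.Injective f) (S : Finset α) (h : S.card < n) : ∃ i, f i ∉ S := by
  by_contra hc
  push_neg at hc
  have hsub : Finset.univ.image f ⊆ S := by
    intro x hx
    simp only [Finset.mem_image] at hx
    obtain ⟨i, -, rfl⟩ := hx
    exact hc i
  have := Finset.card_le_card hsub
  rw [Finset.card_image_of_injective _ hf, Finset.card_univ, Fintype.card_fin] at this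
  omega

theorem stmt16 (k : ℕ) (hk : 1 ≤ k) :
    KConnected k (SimpleGraph.fromRel (convexTightRel k)) ∧
    (∀ (w : Fin k ⊕ Fin (k + 2)) (x₁ x₂ x₃ : Fin (k * (k + 2))),
      (SimpleGraph.fromRel (convexTightRel k)).Adj (Sum.inl w) (Sum.inr x₁) →
      (SimpleGraph.fromRel (convexTightRel k)).Adj (Sum.inl w) (Sum.inr x₃) →
      x₁ ≤ x₂ → x₂ ≤ x₃ →
      (SimpleGraph.fromRel (convexTightRel k)).Adj (Sum.inl w) (Sum.inr x₂)) ∧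
    pe (SimpleGraph.fromRel (convexTightRel k)) = 2 := by
  set G := SimpleGraph.fromRel (convexTightRel k) with hG
  refine ⟨⟨?_, ?_⟩, ?_, ?_⟩
  · -- cardinality
    have : Fintype.card (VT k) = (k + (k + 2)) + k * (k + 2) := by
      simp [Fintype.card_sum, Fintype.card_fin]
    rw [this]
    have : 0 ≤ k * (k + 2) := Nat.zero_le _
    omega
  · -- connectivity after removing < k vertices
    intro S hS
    rw [connected_iff_exists_forall_reachable]
    obtain ⟨y0i, hy0⟩ := VT.exists_not_mem
      (fun y : Fin k => (Sum.inl (Sum.inl y) : VT k))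
      (fun a b h => by simpa using h) S hS
    have hy0' : (Sum.inl (Sum.inl y0i) : VT k) ∈ ((↑S : Set (VT k))ᶜ) := by
      simpa using hy0
    refine ⟨⟨Sum.inl (Sum.inl y0i), hy0'⟩, ?_⟩
    rintro ⟨v, hv⟩
    have hadj : ∀ (u w : VT k) (hu : u ∈ ((↑S : Set (VT k))ᶜ)) (hw : w ∈ ((↑S : Set (VT k))ᶜ)),
        G.Adj u w → (G.induce ((↑S : Set (VT k))ᶜ)).Adj ⟨u, hu⟩ ⟨w, hw⟩ := by
      intro u w hu hw h
      exact h
    rcases v with (y | z) | x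
    · -- another Y vertex: via some X vertex not in S
      obtain ⟨j, hj⟩ := VT.exists_not_mem
        (fun j : Fin k => (Sum.inr ⟨j.val, lt_of_lt_of_le j.isLt
          (Nat.le_mul_of_pos_right k (by omega))⟩ : VT k))
        (fun a b h => by
          simp only [Sum.inr.injEq, Fin.mk.injEq] at h
          exact Fin.ext h) S hS
      have hjmem : (Sum.inr ⟨j.val, lt_of_lt_of_le j.isLt
          (Nat.le_mul_of_pos_right k (by omega))⟩ : VT k) ∈ ((↑S : Set (VT k))ᶜ) := by
        simpa using hj
      exact ((hadj _ _ hy0' hjmem (VT.adj_yx y0i _)).reachable).trans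
        ((hadj _ _ hv hjmem (VT.adj_yx y _)).reachable).symm
    · -- a Z vertex: via some X vertex in its block not in S
      obtain ⟨j, hj⟩ := VT.exists_not_mem
        (fun j : Fin k => (Sum.inr ⟨z.val * k + j.val, VT.blockmem hk z j.isLt⟩ : VT k))
        (fun a b h => by
          simp only [Sum.inr.injEq, Fin.mk.injEq] at h
          exact Fin.ext (by omega)) S hS
      have hjmem : (Sum.inr ⟨z.val * k + j.val, VT.blockmem hk z j.isLt⟩ : VT k)
          ∈ ((↑S : Set (VT k))ᶜ) := by simpa using hj
      have hzadj : G.Adj (Sum.inl (Sum.inr z))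
          (Sum.inr ⟨z.val * k + j.val, VT.blockmem hk z j.isLt⟩) :=
        VT.adj_zx z _ (Nat.le_add_right _ _)
          (by show z.val * k + j.val < z.val * k + k; have := j.isLt; omega)
      exact ((hadj _ _ hy0' hjmem (VT.adj_yx y0i _)).reachable).trans
        ((hadj _ _ hv hjmem hzadj).reachable).symm
    · -- an X vertex: directly adjacent to y0
      exact ((hadj _ _ hy0' hv (VT.adj_yx y0i x)).reachable)
  · -- convexity
    intro w x₁ x₂ x₃ h1 h3 h12 h23
    rcases w with y | z
    · exact VT.adj_yx y x₂
    · rw [hG, fromRel_adj] at h1 h3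
      have hb1 : z.val * k ≤ x₁.val ∧ x₁.val < z.val * k + k := by
        rcases h1.2 with h | h
        · exact h
        · simp [convexTightRel] at h
      have hb3 : z.val * k ≤ x₃.val ∧ x₃.val < z.val * k + k := by
        rcases h3.2 with h | h
        · exact h
        · simp [convexTightRel] at h
      have h12' : x₁.val ≤ x₂.val := h12
      have h23' : x₂.val ≤ x₃.val := h23
      exact VT.adj_zx z x₂ (by omega) (by omega)
  · -- pe = 2
    have hmem : eccW G (Walk.nil (G := G) (u := VT.y0 k hk)) ∈
        {m | ∃ (a b : VT k) (P : G.Walk a b), P.IsPath ∧ eccW G P = m} :=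
      ⟨_, _, _, Walk.IsPath.nil, rfl⟩
    have hub : eccW G (Walk.nil (G := G) (u := VT.y0 k hk)) ≤ 2 := by
      apply Finset.sup_le
      intro u _
      unfold walkDist
      apply Finset.inf'_le_of_le (b := VT.y0 k hk)
      · simp [Walk.support_nil]
      · exact VT.dist_le_two hk u
    have hlb : ∀ m ∈ {m | ∃ (a b : VT k) (P : G.Walk a b), P.IsPath ∧ eccW G P = m},
        2 ≤ m := by
      rintro m ⟨a, b, P, hp, rfl⟩
      by_contra hcon
      push_neg at hcon
      have hecc : eccW G P ≤ 1 := by omega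
      have hall : ∀ i : Fin (k + 2), ∃ v ∈ P.support, regionOf k v = some i := by
        intro i
        have hwd : walkDist G P (Sum.inl (Sum.inr i)) ≤ 1 :=
          le_trans (Finset.le_sup (Finset.mem_univ _)) hecc
        unfold walkDist at hwd
        replace hwd : ∃ v ∈ P.support.toFinset, G.dist (Sum.inl (Sum.inr i)) v ≤ 1 := by
          obtain ⟨v, hv, heq⟩ := Finset.exists_mem_eq_inf' (s := P.support.toFinset)
            ⟨a, List.mem_toFinset.mpr P.start_mem_support⟩ (fun x => G.dist (Sum.inl (Sum.inr i)) x)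
          exact ⟨v, hv, by rw [← heq]; exact hwd⟩
        obtain ⟨v, hv, hdv⟩ := hwd
        rw [List.mem_toFinset] at hv
        refine ⟨v, hv, ?_⟩
        rcases VT.eq_or_adj_of_dist_le_one hk hdv with h | h
        · rw [← h]; rfl
        · exact VT.region_eq_of_adj_z h
      exact VT.not_all_hit hp hall
    have hnonempty : {m | ∃ (a b : VT k) (P : G.Walk a b), P.IsPath ∧ eccW G P = m}.Nonempty :=
      ⟨_, hmem⟩
    unfold pe
    refine le_antisymm ((Nat.sInf_le hmem).trans hub) (hlb _ (Nat.sInf_mem hnonempty))
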